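/- Fix l ∈ ℕ, propensities p₁,…,p_l ∈ (0,1], and a measurable space 𝒳 with measurable singletons. Let 𝔓 be an operator mapping measurable functions f* : {0,1}^l × 𝒳 → ℝ to measurable functions {0,1}^l × 𝒳 → ℝ such that for every probability space, every joint distribution of (X, Y*) with X : Ω → 𝒳, Y* : Ω → {0,1}^l, and masks M : Ω → {0,1}^l with mutually independent coordinates, jointly independent of (X, Y*), ℙ(M_i = 1) = p_i, and Y := M ⊙ Y*, one has 𝔼[f*(Y*, X)] = 𝔼[𝔓(f*)(Y, X)] for all f*. Then 𝔓(f*)(y, x) = (∏_{i ∈ I(y)} 1/p_i) · Σ_{𝒥 ⊆ I(y)} f*(𝟙_𝒥, x) · ∏_{j ∈ I(y) \ 𝒥} (p_j − 1) for all f*, y ∈ {0,1}^l, and x ∈ 𝒳; i.e., the propensity-scoring operator of the multilabel unbiasedness theorem is the unique such operator. -/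

import Mathlib

open MeasureTheory ProbabilityTheory

/-- The set of positive labels `I(y) = {i : yᵢ = 1}` of a label vector `y ∈ {0,1}^l`. -/
noncomputable def posSet {l : ℕ} (y : Fin l → ℝ) : Finset (Fin l) :=
  Finset.univ.filter (fun i => y i = 1)

/-- The indicator vector `𝟙_𝒥 ∈ {0,1}^l` of a subset `𝒥 ⊆ {1,…,l}`. -/
def indVec {l : ℕ} (J : Finset (Fin l)) : Fin l → ℝ := fun i => if i ∈ J then 1 else 0

/-- The propensity-scored version of a general multilabel loss:
`f(y, x) = (∏_{i ∈ I(y)} 1/pᵢ) · Σ_{𝒥 ⊆ I(y)} f*(𝟙_𝒥, x) · ∏_{j ∈ I(y) \ 𝒥} (pⱼ − 1)`. -/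
noncomputable def psML {l : ℕ} {𝒳 : Type*} (p : Fin l → ℝ)
    (fstar : (Fin l → ℝ) → 𝒳 → ℝ) : (Fin l → ℝ) → 𝒳 → ℝ :=
  fun y x => (∏ i ∈ posSet y, (p i)⁻¹) *
    ∑ J ∈ (posSet y).powerset, fstar (indVec J) x * ∏ j ∈ posSet y \ J, (p j - 1)

lemma posSet_indVec {l : ℕ} (J : Finset (Fin l)) : posSet (indVec J) = J := by
  ext i
  simp only [posSet, indVec, Finset.mem_filter, Finset.mem_univ, true_and]
  by_cases h : i ∈ J <;> simp [h]

lemma indVec_posSet {l : ℕ} (y : Fin l → ℝ) (hy : ∀ i, y i = 0 ∨ y i = 1) :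
    indVec (posSet y) = y := by
  funext i
  simp only [indVec, posSet, Finset.mem_filter, Finset.mem_univ, true_and]
  rcases hy i with h | h <;> simp [h]

/-- the inner sum-product identity -/
lemma sum_prod_bool {l : ℕ} (r : Fin l → Bool → ℝ) :
    ∑ ω : Fin l → Bool, ∏ i, r i (ω i) = ∏ i, (r i true + r i false) := by
  rw [← Fintype.piFinset_univ, Finset.sum_prod_piFinset]
  simp

lemma key0 {l : ℕ} (p : Fin l → ℝ) (S J : Finset (Fin l)) (hJS : J ⊆ S) :
    ∑ ω : Fin l → Bool,
        (if S.filter (fun i => ω i = true) = J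
          then (∏ i, (if ω i then p i else 1 - p i)) else 0)
      = (∏ i ∈ J, p i) * ∏ i ∈ S \ J, (1 - p i) := by
  classical
  set r : Fin l → Bool → ℝ := fun i b =>
    (if b then p i else 1 - p i) * (if i ∈ S then (if ((b = true) ↔ i ∈ J) then 1 else 0) else 1)
    with hr
  have h3 : ∀ ω : Fin l → Bool,
      (S.filter (fun i => ω i = true) = J) ↔ (∀ i ∈ S, ((ω i = true) ↔ i ∈ J)) := by
    intro ω
    constructor
    · intro h i hiS
      constructor
      · intro hωi
        rw [← h]; simp [Finset.mem_filter, hiS, hωi]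
      · intro hiJ
        have := h ▸ hiJ
        exact (Finset.mem_filter.mp this).2
    · intro h
      ext i
      simp only [Finset.mem_filter]
      constructor
      · rintro ⟨hiS, hωi⟩; exact (h i hiS).mp hωi
      · intro hiJ
        have hiS := hJS hiJ
        exact ⟨hiS, (h i hiS).mpr hiJ⟩
  calc
    ∑ ω : Fin l → Bool,
        (if S.filter (fun i => ω i = true) = J
          then (∏ i, (if ω i then p i else 1 - p i)) else 0)
      = ∑ ω : Fin l → Bool, ∏ i, r i (ω i) := by
        refine Finset.sum_congr rfl fun ω _ => ?_
        rw [hr]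
        simp only
        rw [Finset.prod_mul_distrib]
        have h2 : (∏ i, (if i ∈ S then (if ((ω i = true) ↔ i ∈ J) then (1:ℝ) else 0) else 1))
            = ∏ i ∈ S, (if ((ω i = true) ↔ i ∈ J) then (1:ℝ) else 0) := by
          rw [Finset.prod_ite_mem]
          congr 1
          simp
        rw [h2, Finset.prod_boole]
        by_cases h : S.filter (fun i => ω i = true) = J
        · rw [if_pos h, if_pos ((h3 ω).mp h), mul_one]
        · rw [if_neg h, if_neg (fun hc => h ((h3 ω).mpr hc)), mul_zero]
    _ = ∏ i, (r i true + r i false) := sum_prod_bool r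
    _ = ∏ i, (if i ∈ S then (if i ∈ J then p i else 1 - p i) else 1) := by
        refine Finset.prod_congr rfl fun i _ => ?_
        by_cases hiS : i ∈ S <;> by_cases hiJ : i ∈ J <;> simp [hr, hiS, hiJ]
    _ = ∏ i ∈ S, (if i ∈ J then p i else 1 - p i) := by
        rw [Finset.prod_ite_mem]
        congr 1
        simp
    _ = (∏ i ∈ J, p i) * ∏ i ∈ S \ J, (1 - p i) := by
        rw [Finset.prod_ite]
        congr 1
        · congr 1
          rw [Finset.filter_mem_eq_inter, Finset.inter_eq_right.mpr hJS]
        · congr 1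
          ext i
          simp only [Finset.mem_filter, Finset.mem_sdiff]

lemma key1 {l : ℕ} (p : Fin l → ℝ) (G : (Fin l → ℝ) → ℝ) (y : Fin l → ℝ)
    (hy : ∀ i, y i = 0 ∨ y i = 1) :
    ∑ ω : Fin l → Bool, (∏ i, (if ω i then p i else 1 - p i)) *
        G (fun i => (if ω i then (1:ℝ) else 0) * y i)
      = ∑ J ∈ (posSet y).powerset,
          ((∏ i ∈ J, p i) * ∏ i ∈ posSet y \ J, (1 - p i)) * G (indVec J) := by
  classical
  set S := posSet y with hS
  have harg : ∀ ω : Fin l → Bool,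
      (fun i => (if ω i then (1:ℝ) else 0) * y i)
        = indVec (S.filter (fun i => ω i = true)) := by
    intro ω
    funext i
    simp only [indVec, Finset.mem_filter]
    rcases hy i with h | h
    · have hiS : i ∉ S := by simp [hS, posSet, h]
      simp [h, hiS]
    · have hiS : i ∈ S := by simp [hS, posSet, h]
      simp [h, hiS]
  calc
    ∑ ω : Fin l → Bool, (∏ i, (if ω i then p i else 1 - p i)) *
        G (fun i => (if ω i then (1:ℝ) else 0) * y i)
      = ∑ ω : Fin l → Bool, ∑ J ∈ S.powerset,
          (if S.filter (fun i => ω i = true) = J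
            then (∏ i, (if ω i then p i else 1 - p i)) * G (indVec J) else 0) := by
        refine Finset.sum_congr rfl fun ω _ => ?_
        rw [harg ω, Finset.sum_ite_eq]
        have : S.filter (fun i => ω i = true) ∈ S.powerset := by
          simp [Finset.filter_subset]
        simp [this]
    _ = ∑ J ∈ S.powerset,
          ((∏ i ∈ J, p i) * ∏ i ∈ S \ J, (1 - p i)) * G (indVec J) := by
        rw [Finset.sum_comm]
        refine Finset.sum_congr rfl fun J hJ => ?_
        have hJS : J ⊆ S := Finset.mem_powerset.mp hJ
        rw [← key0 p S J hJS, Finset.sum_mul]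
        refine Finset.sum_congr rfl fun ω _ => ?_
        split_ifs <;> simp

lemma key2 {l : ℕ} {𝒳 : Type*} (p : Fin l → ℝ) (hp : ∀ i, p i ∈ Set.Ioc (0 : ℝ) 1)
    (fstar : (Fin l → ℝ) → 𝒳 → ℝ) (x : 𝒳) (S : Finset (Fin l)) :
    ∑ J ∈ S.powerset, ((∏ i ∈ J, p i) * ∏ i ∈ S \ J, (1 - p i)) *
        psML p fstar (indVec J) x
      = fstar (indVec S) x := by
  classical
  have hstep : ∀ J ∈ S.powerset,
      ((∏ i ∈ J, p i) * ∏ i ∈ S \ J, (1 - p i)) * psML p fstar (indVec J) x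
        = ∑ K ∈ J.powerset,
            (∏ i ∈ S \ J, (1 - p i)) * (fstar (indVec K) x * ∏ j ∈ J \ K, (p j - 1)) := by
    intro J hJ
    have hprod : (∏ i ∈ J, p i) * ∏ i ∈ J, (p i)⁻¹ = 1 := by
      rw [← Finset.prod_mul_distrib]
      refine Finset.prod_eq_one fun i _ => mul_inv_cancel₀ (ne_of_gt (hp i).1)
    simp only [psML, posSet_indVec]
    rw [Finset.mul_sum, Finset.mul_sum]
    refine Finset.sum_congr rfl fun K hK => ?_
    calc ((∏ i ∈ J, p i) * ∏ i ∈ S \ J, (1 - p i)) *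
          ((∏ i ∈ J, (p i)⁻¹) * (fstar (indVec K) x * ∏ j ∈ J \ K, (p j - 1)))
        = ((∏ i ∈ J, p i) * ∏ i ∈ J, (p i)⁻¹) * ((∏ i ∈ S \ J, (1 - p i)) *
            (fstar (indVec K) x * ∏ j ∈ J \ K, (p j - 1))) := by ring
      _ = _ := by rw [hprod, one_mul]
  rw [Finset.sum_congr rfl hstep]
  rw [Finset.sum_comm' (s' := fun K => (S.powerset).filter (fun J => K ⊆ J)) (t' := S.powerset)
    (by
      intro J K
      simp only [Finset.mem_powerset, Finset.mem_filter]
      constructor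
      · rintro ⟨hJS, hKJ⟩; exact ⟨⟨hJS, hKJ⟩, hKJ.trans hJS⟩
      · rintro ⟨⟨hJS, hKJ⟩, _⟩; exact ⟨hJS, hKJ⟩)]
  have hinner : ∀ K ∈ S.powerset,
      ∑ J ∈ (S.powerset).filter (fun J => K ⊆ J),
          (∏ i ∈ S \ J, (1 - p i)) * (fstar (indVec K) x * ∏ j ∈ J \ K, (p j - 1))
        = fstar (indVec K) x * (if K = S then 1 else 0) := by
    intro K hK
    have hKS : K ⊆ S := Finset.mem_powerset.mp hK
    have hre : ∑ J ∈ (S.powerset).filter (fun J => K ⊆ J),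
          (∏ i ∈ S \ J, (1 - p i)) * (fstar (indVec K) x * ∏ j ∈ J \ K, (p j - 1))
        = ∑ T ∈ (S \ K).powerset,
          (∏ i ∈ (S \ K) \ T, (1 - p i)) * (fstar (indVec K) x * ∏ j ∈ T, (p j - 1)) := by
      refine Finset.sum_nbij' (fun J => J \ K) (fun T => K ∪ T) ?_ ?_ ?_ ?_ ?_
      · intro J hJ
        simp only [Finset.mem_filter, Finset.mem_powerset] at hJ
        exact Finset.mem_powerset.mpr (Finset.sdiff_subset_sdiff hJ.1 Finset.Subset.rfl)
      · intro T hT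
        simp only [Finset.mem_powerset] at hT
        simp only [Finset.mem_filter, Finset.mem_powerset]
        exact ⟨Finset.union_subset hKS (hT.trans Finset.sdiff_subset), Finset.subset_union_left⟩
      · intro J hJ
        simp only [Finset.mem_filter, Finset.mem_powerset] at hJ
        exact Finset.union_sdiff_of_subset hJ.2
      · intro T hT
        simp only [Finset.mem_powerset] at hT
        have hd : Disjoint K T := Finset.disjoint_of_subset_right hT Finset.disjoint_sdiff
        show (K ∪ T) \ K = T
        rw [Finset.union_sdiff_cancel_left hd]
      · intro J hJ
        simp only [Finset.mem_filter, Finset.mem_powerset] at hJ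
        have hKJ : (S \ K) \ (J \ K) = S \ J := by
          rw [sdiff_sdiff, Finset.sup_eq_union, Finset.union_sdiff_of_subset hJ.2]
        rw [hKJ]
    rw [hre]
    have hsum : ∑ T ∈ (S \ K).powerset,
          (∏ i ∈ (S \ K) \ T, (1 - p i)) * (fstar (indVec K) x * ∏ j ∈ T, (p j - 1))
        = fstar (indVec K) x *
            ∑ T ∈ (S \ K).powerset, (∏ j ∈ T, (p j - 1)) * ∏ i ∈ (S \ K) \ T, (1 - p i) := by
      rw [Finset.mul_sum]
      refine Finset.sum_congr rfl fun T _ => by ring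
    rw [hsum, ← Finset.prod_add]
    have h0 : ∀ i ∈ S \ K, (p i - 1) + (1 - p i) = 0 := fun i _ => by ring
    rw [Finset.prod_congr rfl h0, Finset.prod_const]
    congr 1
    by_cases h : K = S
    · have : S \ K = ∅ := by rw [h, Finset.sdiff_self]
      simp [h, this]
    · have : S \ K ≠ ∅ := by
        intro hc
        exact h (Finset.Subset.antisymm hKS
          (by rwa [← Finset.sdiff_eq_empty_iff_subset]))
      simp [h, Finset.card_ne_zero_of_mem, zero_pow (Finset.card_ne_zero.mpr (Finset.nonempty_of_ne_empty this))]
  rw [Finset.sum_congr rfl hinner]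
  have hco : ∀ K ∈ S.powerset,
      fstar (indVec K) x * (if K = S then 1 else 0)
        = if K = S then fstar (indVec K) x else 0 := by
    intro K _
    split_ifs <;> simp
  rw [Finset.sum_congr rfl hco, Finset.sum_ite_eq' S.powerset S (fun K => fstar (indVec K) x)]
  simp

section Prob

variable {l : ℕ} (p : Fin l → ℝ) (hp : ∀ i, p i ∈ Set.Ioc (0 : ℝ) 1)

noncomputable def μB (a : ℝ) : Measure Bool :=
  ENNReal.ofReal a • Measure.dirac true + ENNReal.ofReal (1 - a) • Measure.dirac false

lemma μB_true (a : ℝ) : μB a {true} = ENNReal.ofReal a := by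
  simp [μB, Measure.dirac_apply' _ (measurableSet_singleton _), Set.indicator]

lemma μB_false (a : ℝ) : μB a {false} = ENNReal.ofReal (1 - a) := by
  simp [μB, Measure.dirac_apply' _ (measurableSet_singleton _), Set.indicator]

lemma μB_univ (a : ℝ) (h0 : 0 ≤ a) (h1 : a ≤ 1) : μB a Set.univ = 1 := by
  simp [μB, ← ENNReal.ofReal_add h0 (by linarith : (0:ℝ) ≤ 1 - a)]

lemma pi_iInter (P : Measure (Fin l → Bool)) (hP : P = Measure.pi (fun i => μB (p i)))
    (hprob : ∀ i, IsProbabilityMeasure (μB (p i)))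
    (S : Finset (Fin l)) (t : Fin l → Set Bool) :
    P (⋂ i ∈ S, (fun ω : Fin l → Bool => ω i) ⁻¹' t i) = ∏ i ∈ S, μB (p i) (t i) := by
  have hset : (⋂ i ∈ S, (fun ω : Fin l → Bool => ω i) ⁻¹' t i)
      = Set.pi Set.univ (fun i => if i ∈ S then t i else Set.univ) := by
    ext ω
    simp only [Set.mem_iInter, Set.mem_preimage, Set.mem_pi, Set.mem_univ, true_imp_iff]
    constructor
    · intro h i
      by_cases hi : i ∈ S
      · simp [hi, h i hi]
      · simp [hi]
    · intro h i hi
      have := h i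
      simpa [hi] using this
  rw [hP, hset, Measure.pi_pi]
  have : ∀ i, μB (p i) (if i ∈ S then t i else Set.univ)
      = if i ∈ S then μB (p i) (t i) else 1 := by
    intro i
    split_ifs
    · rfl
    · exact (hprob i).measure_univ
  rw [Finset.prod_congr rfl (fun i _ => this i), Finset.prod_ite_mem]
  congr 1
  simp

end Prob

lemma eqA {𝒳 : Type*} [MeasurableSpace 𝒳] [MeasurableSingletonClass 𝒳]
    (l : ℕ) (p : Fin l → ℝ) (hp : ∀ i, p i ∈ Set.Ioc (0 : ℝ) 1)
    (𝔓 : ((Fin l → ℝ) → 𝒳 → ℝ) → ((Fin l → ℝ) → 𝒳 → ℝ))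
    (hunbiased : ∀ (Ω : Type) (_ : MeasurableSpace Ω) (P : Measure Ω)
      (_ : IsProbabilityMeasure P)
      (X : Ω → 𝒳) (Ystar M : Ω → Fin l → ℝ),
      Measurable X → Measurable Ystar → Measurable M →
      (∀ ω i, Ystar ω i = 0 ∨ Ystar ω i = 1) →
      (∀ ω i, M ω i = 0 ∨ M ω i = 1) →
      iIndepFun (fun i ω => M ω i) P →
      IndepFun (fun ω => (X ω, Ystar ω)) M P →
      (∀ i, P {ω | M ω i = 1} = ENNReal.ofReal (p i)) →
      ∀ fstar : (Fin l → ℝ) → 𝒳 → ℝ, Measurable (Function.uncurry fstar) →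
        Integrable (fun ω => fstar (Ystar ω) (X ω)) P →
        Integrable (fun ω => 𝔓 fstar (fun i => M ω i * Ystar ω i) (X ω)) P →
        ∫ ω, fstar (Ystar ω) (X ω) ∂P
          = ∫ ω, 𝔓 fstar (fun i => M ω i * Ystar ω i) (X ω) ∂P)
    (fstar : (Fin l → ℝ) → 𝒳 → ℝ) (hf : Measurable (Function.uncurry fstar))
    (y : Fin l → ℝ) (hy : ∀ i, y i = 0 ∨ y i = 1) (x : 𝒳) :
    fstar y x = ∑ J ∈ (posSet y).powerset,
      ((∏ i ∈ J, p i) * ∏ i ∈ posSet y \ J, (1 - p i)) * 𝔓 fstar (indVec J) x := by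
  classical
  haveI hprob : ∀ i, IsProbabilityMeasure (μB (p i)) := fun i =>
    ⟨μB_univ (p i) (le_of_lt (hp i).1) (hp i).2⟩
  set P : Measure (Fin l → Bool) := Measure.pi (fun i => μB (p i)) with hP
  haveI : IsProbabilityMeasure P := by rw [hP]; infer_instance
  set M : (Fin l → Bool) → Fin l → ℝ := fun ω i => if ω i then 1 else 0 with hM
  have hMmeas : Measurable M := by
    refine measurable_pi_lambda _ fun i => ?_
    exact Measurable.comp (f := fun ω : Fin l → Bool => ω i)
      (g := fun b : Bool => if b then (1:ℝ) else 0)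
      Measurable.of_discrete (measurable_pi_apply i)
  have hM01 : ∀ ω i, M ω i = 0 ∨ M ω i = 1 := by
    intro ω i
    by_cases h : ω i <;> simp [hM, h]
  have hiIndep : iIndepFun
      (fun i ω => M ω i) P := by
    rw [iIndepFun_iff_measure_inter_preimage_eq_mul]
    intro S sets _
    have hpre : ∀ i, (fun ω : Fin l → Bool => M ω i) ⁻¹' sets i
        = (fun ω : Fin l → Bool => ω i) ⁻¹' ((fun b : Bool => if b then (1:ℝ) else 0) ⁻¹' sets i) :=
      fun i => rfl
    calc P (⋂ i ∈ S, (fun ω => M ω i) ⁻¹' sets i)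
        = P (⋂ i ∈ S, (fun ω : Fin l → Bool => ω i) ⁻¹'
            ((fun b : Bool => if b then (1:ℝ) else 0) ⁻¹' sets i)) := by
          simp_rw [hpre]
      _ = ∏ i ∈ S, μB (p i) ((fun b : Bool => if b then (1:ℝ) else 0) ⁻¹' sets i) :=
          pi_iInter p P hP hprob S _
      _ = ∏ i ∈ S, P ((fun ω => M ω i) ⁻¹' sets i) := by
          refine Finset.prod_congr rfl fun i hi => ?_
          rw [hpre i]
          have := pi_iInter p P hP hprob {i}
            (fun j => (fun b : Bool => if b then (1:ℝ) else 0) ⁻¹' sets j)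
          simp only [Finset.mem_singleton, Set.iInter_iInter_eq_left, Finset.prod_singleton] at this
          rw [this]
  have hIndep : IndepFun (fun _ : Fin l → Bool => (x, y)) M P := by
    rw [indepFun_iff_measure_inter_preimage_eq_mul]
    intro s t _ _
    by_cases hmem : (x, y) ∈ s
    · have h1 : (fun _ : Fin l → Bool => (x, y)) ⁻¹' s = Set.univ := by
        ext ω; simp [hmem]
      simp [h1]
    · have h1 : (fun _ : Fin l → Bool => (x, y)) ⁻¹' s = ∅ := by
        ext ω; simp [hmem]
      simp [h1]
  have hMi : ∀ i, P {ω | M ω i = 1} = ENNReal.ofReal (p i) := by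
    intro i
    have hset : {ω : Fin l → Bool | M ω i = 1} = (fun ω : Fin l → Bool => ω i) ⁻¹' {true} := by
      ext ω
      by_cases h : ω i <;> simp [hM, h]
    have := pi_iInter p P hP hprob {i} (fun _ => {true})
    simp only [Finset.mem_singleton, Set.iInter_iInter_eq_left, Finset.prod_singleton] at this
    rw [hset, this, μB_true]
  have key := hunbiased (Fin l → Bool) inferInstance P inferInstance
    (fun _ => x) (fun _ => y) M measurable_const measurable_const hMmeas
    (fun _ i => hy i) hM01 hiIndep hIndep hMi fstar hf
    (Integrable.of_finite) (Integrable.of_finite)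
  -- compute singleton measures
  have hsing : ∀ ω : Fin l → Bool,
      (P {ω}).toReal = ∏ i, (if ω i then p i else 1 - p i) := by
    intro ω
    have h1 : {ω} = Set.pi Set.univ (fun i => {ω i}) := (Set.univ_pi_singleton ω).symm
    rw [h1, hP, Measure.pi_pi, ENNReal.toReal_prod]
    refine Finset.prod_congr rfl fun i _ => ?_
    by_cases h : ω i = true
    · simp only [h, if_true]
      rw [μB_true, ENNReal.toReal_ofReal (le_of_lt (hp i).1)]
    · have h' : ω i = false := by simpa using h
      rw [h']
      simp only [Bool.false_eq_true, if_false]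
      rw [μB_false, ENNReal.toReal_ofReal (by linarith [(hp i).2] : (0:ℝ) ≤ 1 - p i)]
  rw [integral_const, integral_fintype (Integrable.of_finite)] at key
  simp only [measureReal_def, measure_univ, ENNReal.toReal_one, smul_eq_mul, one_mul, one_smul] at key
  rw [key]
  rw [← key1 p (fun v => 𝔓 fstar v x) y hy]
  refine Finset.sum_congr rfl fun ω _ => ?_
  rw [hsing ω]


/-- **Uniqueness of the multilabel propensity-scoring operator.** If an operator `𝔓` on
measurable multilabel losses yields unbiased estimates for every probability space and every
joint distribution of `(X, Y*)` with masks `M` having mutually independent coordinates,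
jointly independent of `(X, Y*)`, with `ℙ(Mᵢ = 1) = pᵢ` and `Y = M ⊙ Y*`, then `𝔓`
coincides with the propensity-scoring operator `psML p` on `{0,1}^l`-valued labels. -/
theorem uniqueness_multilabel_ps
    {𝒳 : Type*} [MeasurableSpace 𝒳] [MeasurableSingletonClass 𝒳]
    (l : ℕ) (p : Fin l → ℝ) (hp : ∀ i, p i ∈ Set.Ioc (0 : ℝ) 1)
    (𝔓 : ((Fin l → ℝ) → 𝒳 → ℝ) → ((Fin l → ℝ) → 𝒳 → ℝ))
    (hunbiased : ∀ (Ω : Type) (_ : MeasurableSpace Ω) (P : Measure Ω)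
      (_ : IsProbabilityMeasure P)
      (X : Ω → 𝒳) (Ystar M : Ω → Fin l → ℝ),
      Measurable X → Measurable Ystar → Measurable M →
      (∀ ω i, Ystar ω i = 0 ∨ Ystar ω i = 1) →
      (∀ ω i, M ω i = 0 ∨ M ω i = 1) →
      iIndepFun (fun i ω => M ω i) P →
      IndepFun (fun ω => (X ω, Ystar ω)) M P →
      (∀ i, P {ω | M ω i = 1} = ENNReal.ofReal (p i)) →
      ∀ fstar : (Fin l → ℝ) → 𝒳 → ℝ, Measurable (Function.uncurry fstar) →
        Integrable (fun ω => fstar (Ystar ω) (X ω)) P →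
        Integrable (fun ω => 𝔓 fstar (fun i => M ω i * Ystar ω i) (X ω)) P →
        ∫ ω, fstar (Ystar ω) (X ω) ∂P
          = ∫ ω, 𝔓 fstar (fun i => M ω i * Ystar ω i) (X ω) ∂P) :
    ∀ fstar : (Fin l → ℝ) → 𝒳 → ℝ, Measurable (Function.uncurry fstar) →
      ∀ y : Fin l → ℝ, (∀ i, y i = 0 ∨ y i = 1) → ∀ x : 𝒳,
        𝔓 fstar y x = psML p fstar y x := by
  classical
  intro fstar hf y hy x
  have hzero : ∀ S : Finset (Fin l),
      𝔓 fstar (indVec S) x = psML p fstar (indVec S) x := by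
    intro S
    induction S using Finset.strongInduction with
    | _ S ih =>
      have hyS : ∀ i, indVec S i = 0 ∨ indVec S i = 1 := by
        intro i
        unfold indVec
        split_ifs <;> simp
      have h1 := eqA l p hp 𝔓 hunbiased fstar hf (indVec S) hyS x
      rw [posSet_indVec] at h1
      have h2 := key2 p hp fstar x S
      have h3 : ∑ J ∈ S.powerset,
          ((∏ i ∈ J, p i) * ∏ i ∈ S \ J, (1 - p i)) *
            (𝔓 fstar (indVec J) x - psML p fstar (indVec J) x) = 0 := by
        have : ∑ J ∈ S.powerset,
            ((∏ i ∈ J, p i) * ∏ i ∈ S \ J, (1 - p i)) *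
              (𝔓 fstar (indVec J) x - psML p fstar (indVec J) x)
            = (∑ J ∈ S.powerset,
                ((∏ i ∈ J, p i) * ∏ i ∈ S \ J, (1 - p i)) * 𝔓 fstar (indVec J) x)
              - ∑ J ∈ S.powerset,
                ((∏ i ∈ J, p i) * ∏ i ∈ S \ J, (1 - p i)) * psML p fstar (indVec J) x := by
          rw [← Finset.sum_sub_distrib]
          exact Finset.sum_congr rfl fun J _ => by ring
        rw [this, ← h1, h2, sub_self]
      have hSmem : S ∈ S.powerset := Finset.mem_powerset_self S
      rw [← Finset.add_sum_erase _ _ hSmem] at h3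
      have hrest : ∑ J ∈ S.powerset.erase S,
          ((∏ i ∈ J, p i) * ∏ i ∈ S \ J, (1 - p i)) *
            (𝔓 fstar (indVec J) x - psML p fstar (indVec J) x) = 0 := by
        refine Finset.sum_eq_zero fun J hJ => ?_
        have hJ' := Finset.mem_erase.mp hJ
        have hss : J ⊂ S :=
          Finset.ssubset_iff_subset_ne.mpr ⟨Finset.mem_powerset.mp hJ'.2, hJ'.1⟩
        rw [ih J hss, sub_self, mul_zero]
      rw [hrest, add_zero, Finset.sdiff_self, Finset.prod_empty, mul_one] at h3
      have hne : (∏ i ∈ S, p i) ≠ 0 :=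
        Finset.prod_ne_zero_iff.mpr fun i _ => ne_of_gt (hp i).1
      have := mul_eq_zero.mp h3
      rcases this with h | h
      · exact absurd h hne
      · linarith [sub_eq_zero.mp h]
  have := hzero (posSet y)
  rwa [indVec_posSet y hy] at this
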